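/- Let f : [a,b] → ℝ be C¹ and for α ∈ ℝ define Φ_α : [α-b, α-a] × ℝ → ℝ by Φ_α(x₁,x₂) = x₂ + f(α - x₁). Then for any line segment L = {(1-t)p + tq : t ∈ [0,1]} contained in the domain of Φ_α, there is a constant C (depending only on f) such that the Lebesgue measure of Φ_α(L) is at most C · (sup over z ∈ L of |θ_α(z) − θ_L|) · |L|, where θ_L is the direction of L, θ_α(z) is the direction of the vector (1, f'(α − z₁)), |L| is the length of L, and |θ − θ'| denotes the distance in ℝ/πℤ. -/

import Mathlib

open Real MeasureTheory Set Filter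
open scoped Pointwise ENNReal

noncomputable section

instance : Fact (0 < Real.pi) := ⟨Real.pi_pos⟩

/-- Unoriented direction of a plane vector, as an element of ℝ/πℤ. -/
def dir (v : ℝ × ℝ) : AddCircle Real.pi :=
  if v.1 = 0 then ((Real.pi / 2 : ℝ) : AddCircle Real.pi)
  else ((Real.arctan (v.2 / v.1) : ℝ) : AddCircle Real.pi)

/-- Euclidean length of a plane vector. -/
def elen (v : ℝ × ℝ) : ℝ := Real.sqrt (v.1 ^ 2 + v.2 ^ 2)

/-- Open Euclidean δ-neighborhood of a plane set. -/
def enbhd (δ : ℝ) (S : Set (ℝ × ℝ)) : Set (ℝ × ℝ) := {x | ∃ y ∈ S, elen (x - y) < δ}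

/-- Membership in the closed arc `[θ₁, θ₂]` of ℝ/πℤ (standard orientation). -/
def arcMemCC (θ₁ θ₂ θ : AddCircle Real.pi) : Prop :=
  ∃ t₁ t₂ t : ℝ, (t₁ : AddCircle Real.pi) = θ₁ ∧ (t₂ : AddCircle Real.pi) = θ₂ ∧
    (t : AddCircle Real.pi) = θ ∧ t₁ ≤ t ∧ t ≤ t₂ ∧ t₂ - t₁ < Real.pi

/-- Membership in the open arc `(θ₁, θ₂)` of ℝ/πℤ (standard orientation). -/
def arcMemOO (θ₁ θ₂ θ : AddCircle Real.pi) : Prop :=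
  ∃ t₁ t₂ t : ℝ, (t₁ : AddCircle Real.pi) = θ₁ ∧ (t₂ : AddCircle Real.pi) = θ₂ ∧
    (t : AddCircle Real.pi) = θ ∧ t₁ < t ∧ t < t₂ ∧ t₂ - t₁ < Real.pi

lemma abs_sin_le_norm (u : ℝ) : |Real.sin u| ≤ ‖(u : AddCircle Real.pi)‖ := by
  rw [AddCircle.norm_eq]
  set n : ℤ := round (Real.pi⁻¹ * u) with hn
  have h1 : |Real.sin (u - n * Real.pi)| = |Real.sin u| := by
    rw [Real.sin_sub_int_mul_pi, abs_mul]
    have : |(-1:ℝ) ^ n| = 1 := by rcases Int.even_or_odd n with h | h <;> simp [h.neg_one_zpow]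
    rw [this, one_mul]
  calc |Real.sin u| = |Real.sin (u - n * Real.pi)| := h1.symm
    _ ≤ |u - n * Real.pi| := Real.abs_sin_le_abs
    _ = |u - round (Real.pi⁻¹ * u) * Real.pi| := by rw [hn]


lemma abs_sin_le_dist (s t : ℝ) :
    |Real.sin (s - t)| ≤ dist ((s : AddCircle Real.pi)) ((t : AddCircle Real.pi)) := by
  rw [dist_eq_norm, ← QuotientAddGroup.mk_sub]
  exact abs_sin_le_norm (s - t)


lemma addCircle_dist_le_pi (x y : AddCircle Real.pi) : dist x y ≤ Real.pi := by
  rw [dist_eq_norm]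
  calc ‖x - y‖ ≤ |Real.pi| / 2 := AddCircle.norm_le_half_period _ Real.pi_pos.ne'
    _ ≤ Real.pi := by rw [abs_of_pos Real.pi_pos]; linarith [Real.pi_pos]

lemma mvt_abs {a b : ℝ} (f f' : ℝ → ℝ) (hderiv : ∀ t ∈ Set.Icc a b, HasDerivAt f (f' t) t)
    {x y : ℝ} (hx : x ∈ Set.Icc a b) (hy : y ∈ Set.Icc a b) :
    ∃ c, min x y ≤ c ∧ c ≤ max x y ∧ f y - f x = f' c * (y - x) := by
  have main : ∀ x y : ℝ, x ∈ Set.Icc a b → y ∈ Set.Icc a b → x < y →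
      ∃ c, min x y ≤ c ∧ c ≤ max x y ∧ f y - f x = f' c * (y - x) := by
    intro x y hx hy hxy
    have hsub : Set.Icc x y ⊆ Set.Icc a b := Set.Icc_subset_Icc hx.1 hy.2
    have cont : ContinuousOn f (Set.Icc x y) := fun t ht =>
      ((hderiv t (hsub ht)).continuousAt).continuousWithinAt
    have hder : ∀ t ∈ Set.Ioo x y, HasDerivAt f (f' t) t := fun t ht =>
      hderiv t (hsub (Set.Ioo_subset_Icc_self ht))
    obtain ⟨c, hc, hc2⟩ := exists_hasDerivAt_eq_slope f f' hxy cont hder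
    refine ⟨c, ?_, ?_, ?_⟩
    · exact le_trans (min_le_left _ _) hc.1.le
    · exact le_trans hc.2.le (le_max_right _ _)
    · rw [hc2, div_mul_eq_mul_div, mul_div_assoc, div_self (sub_ne_zero.mpr hxy.ne'), mul_one]
  rcases lt_trichotomy x y with h | h | h
  · exact main x y hx hy h
  · exact ⟨x, by simp [h], by simp [h], by simp [h]⟩
  · obtain ⟨c, h1, h2, h3⟩ := main y x hy hx h
    exact ⟨c, by rwa [min_comm], by rwa [max_comm], by linarith⟩

lemma key_est (M m : ℝ) (hm : |m| ≤ M) (v : ℝ × ℝ) :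
    |v.2 - m * v.1| ≤ Real.sqrt (1 + M ^ 2) * dist (dir (1, m)) (dir v) * elen v := by
  have hM : 0 ≤ M := (abs_nonneg m).trans hm
  have hm2 : m ^ 2 ≤ M ^ 2 := by nlinarith [neg_abs_le m, le_abs_self m]
  have hA : (0:ℝ) < Real.sqrt (1 + m ^ 2) := Real.sqrt_pos.mpr (by positivity)
  have hAM : Real.sqrt (1 + m ^ 2) ≤ Real.sqrt (1 + M ^ 2) :=
    Real.sqrt_le_sqrt (by linarith)
  have hdir1 : dir (1, m) = ((Real.arctan m : ℝ) : AddCircle Real.pi) := by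
    simp [dir]
  have hd0 : (0:ℝ) ≤ dist (dir (1,m)) (dir v) := dist_nonneg
  by_cases h1 : v.1 = 0
  · -- vertical case
    have helen : elen v = |v.2| := by
      rw [elen, h1]
      rw [show (0:ℝ)^2 + v.2^2 = v.2^2 by ring, Real.sqrt_sq_eq_abs]
    have hdirv : dir v = ((Real.pi / 2 : ℝ) : AddCircle Real.pi) := by simp [dir, h1]
    have hsin : |Real.sin (Real.arctan m - Real.pi / 2)| = 1 / Real.sqrt (1 + m ^ 2) := by
      rw [show Real.arctan m - Real.pi/2 = -(Real.pi/2 - Real.arctan m) by ring, Real.sin_neg,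
        Real.sin_pi_div_two_sub, abs_neg, Real.cos_arctan]
      exact abs_of_pos (by positivity)
    have hd : 1 / Real.sqrt (1 + m ^ 2) ≤ dist (dir (1, m)) (dir v) := by
      rw [hdir1, hdirv, ← hsin]; exact abs_sin_le_dist _ _
    have hd' : 1 ≤ dist (dir (1,m)) (dir v) * Real.sqrt (1 + m ^ 2) := by
      rwa [div_le_iff₀ hA] at hd
    calc |v.2 - m * v.1| = |v.2| := by rw [h1]; ring_nf
      _ = 1 * |v.2| := (one_mul _).symm
      _ ≤ (dist (dir (1,m)) (dir v) * Real.sqrt (1 + m ^ 2)) * |v.2| :=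
          mul_le_mul_of_nonneg_right hd' (abs_nonneg _)
      _ ≤ (dist (dir (1,m)) (dir v) * Real.sqrt (1 + M ^ 2)) * |v.2| :=
          mul_le_mul_of_nonneg_right (mul_le_mul_of_nonneg_left hAM hd0) (abs_nonneg _)
      _ = Real.sqrt (1 + M ^ 2) * dist (dir (1,m)) (dir v) * elen v := by rw [helen]; ring
  · -- non-vertical case
    set s := v.2 / v.1 with hs
    have hv2 : v.2 = s * v.1 := by rw [hs]; field_simp
    have hB : (0:ℝ) < Real.sqrt (1 + s ^ 2) := Real.sqrt_pos.mpr (by positivity)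
    have hdirv : dir v = ((Real.arctan s : ℝ) : AddCircle Real.pi) := by simp [dir, h1, hs]
    have e1 : Real.sin (Real.arctan m - Real.arctan s)
        = (m - s) / (Real.sqrt (1 + m ^ 2) * Real.sqrt (1 + s ^ 2)) := by
      rw [Real.sin_sub, Real.sin_arctan, Real.cos_arctan, Real.sin_arctan, Real.cos_arctan]
      field_simp <;> ring
    have hsin : |Real.sin (Real.arctan m - Real.arctan s)|
        = |m - s| / (Real.sqrt (1 + m ^ 2) * Real.sqrt (1 + s ^ 2)) := by
      rw [e1, abs_div, abs_of_pos (show (0:ℝ) < Real.sqrt (1+m^2) * Real.sqrt (1+s^2) by positivity)]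
    have hd : |m - s| / (Real.sqrt (1 + m ^ 2) * Real.sqrt (1 + s ^ 2))
        ≤ dist (dir (1, m)) (dir v) := by
      rw [hdir1, hdirv, ← hsin]; exact abs_sin_le_dist _ _
    have hd' : |m - s| ≤ dist (dir (1,m)) (dir v) *
        (Real.sqrt (1 + m ^ 2) * Real.sqrt (1 + s ^ 2)) := by
      rwa [div_le_iff₀ (by positivity)] at hd
    have helen : elen v = |v.1| * Real.sqrt (1 + s ^ 2) := by
      rw [elen, show v.1 ^ 2 + v.2 ^ 2 = v.1 ^ 2 * (1 + s ^ 2) by rw [hv2]; ring,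
        Real.sqrt_mul (sq_nonneg _), Real.sqrt_sq_eq_abs]
    have hLHS : |v.2 - m * v.1| = |m - s| * |v.1| := by
      rw [← abs_mul, ← abs_neg (v.2 - m * v.1)]; congr 1; rw [hv2]; ring
    have h5 : Real.sqrt (1+m^2) * (dist (dir (1,m)) (dir v) * (Real.sqrt (1+s^2) * |v.1|))
        ≤ Real.sqrt (1+M^2) * (dist (dir (1,m)) (dir v) * (Real.sqrt (1+s^2) * |v.1|)) :=
      mul_le_mul_of_nonneg_right hAM (by positivity)
    calc |v.2 - m * v.1| = |m - s| * |v.1| := hLHS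
      _ ≤ (dist (dir (1,m)) (dir v) * (Real.sqrt (1+m^2) * Real.sqrt (1+s^2))) * |v.1| :=
          mul_le_mul_of_nonneg_right hd' (abs_nonneg _)
      _ = Real.sqrt (1+m^2) * (dist (dir (1,m)) (dir v) * (Real.sqrt (1+s^2) * |v.1|)) := by ring
      _ ≤ Real.sqrt (1+M^2) * (dist (dir (1,m)) (dir v) * (Real.sqrt (1+s^2) * |v.1|)) := h5
      _ = Real.sqrt (1 + M ^ 2) * dist (dir (1,m)) (dir v) * elen v := by rw [helen]; ring

theorem stmt0 (a b : ℝ) (hab : a ≤ b) (f f' : ℝ → ℝ)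
    (hderiv : ∀ t ∈ Set.Icc a b, HasDerivAt f (f' t) t)
    (hcont : ContinuousOn f' (Set.Icc a b)) :
    ∃ C > 0, ∀ (α : ℝ) (p q : ℝ × ℝ), p ≠ q →
      segment ℝ p q ⊆ Set.Icc (α - b) (α - a) ×ˢ (Set.univ : Set ℝ) →
      volume ((fun x : ℝ × ℝ => x.2 + f (α - x.1)) '' segment ℝ p q) ≤
        ENNReal.ofReal (C *
          sSup ((fun z : ℝ × ℝ => dist (dir (1, f' (α - z.1))) (dir (q - p))) '' segment ℝ p q) *
          elen (q - p)) := by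
  obtain ⟨M₀, hM₀⟩ := (isCompact_Icc : IsCompact (Set.Icc a b)).exists_bound_of_continuousOn hcont
  set M := max M₀ 0 with hMdef
  have hMb : ∀ t ∈ Set.Icc a b, |f' t| ≤ M := fun t ht =>
    le_trans (by simpa using hM₀ t ht) (le_max_left _ _)
  refine ⟨Real.sqrt (1 + M ^ 2), Real.sqrt_pos.mpr (by positivity), ?_⟩
  set C := Real.sqrt (1 + M ^ 2) with hCdef
  intro α p q hpq hsub
  set S := sSup ((fun z : ℝ × ℝ => dist (dir (1, f' (α - z.1))) (dir (q - p)))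
    '' segment ℝ p q) with hSdef
  have hbdd : BddAbove ((fun z : ℝ × ℝ => dist (dir (1, f' (α - z.1))) (dir (q - p)))
      '' segment ℝ p q) := ⟨Real.pi, by rintro x ⟨z, hz, rfl⟩; exact addCircle_dist_le_pi _ _⟩
  have hSel : ∀ z ∈ segment ℝ p q, dist (dir (1, f' (α - z.1))) (dir (q - p)) ≤ S :=
    fun z hz => le_csSup hbdd ⟨z, hz, rfl⟩
  have hS0 : (0:ℝ) ≤ S := le_trans dist_nonneg (hSel p (left_mem_segment ℝ p q))
  have hstrip : ∀ z ∈ segment ℝ p q, α - z.1 ∈ Set.Icc a b := by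
    intro z hz
    obtain ⟨h1, h2⟩ := (hsub hz).1
    exact ⟨by linarith, by linarith⟩
  -- the central pairwise estimate
  have hpair : ∀ z ∈ segment ℝ p q, ∀ w ∈ segment ℝ p q,
      |(z.2 + f (α - z.1)) - (w.2 + f (α - w.1))| ≤ C * S * elen (q - p) := by
    intro z hz w hw
    rw [segment_eq_image'] at hz hw
    obtain ⟨sz, hsz, hz'⟩ := hz
    obtain ⟨sw, hsw, hw'⟩ := hw
    have hzL : z ∈ segment ℝ p q := by
      rw [segment_eq_image']; exact ⟨sz, hsz, hz'⟩
    have hwL : w ∈ segment ℝ p q := by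
      rw [segment_eq_image']; exact ⟨sw, hsw, hw'⟩
    have hz1 : z.1 = p.1 + sz * (q.1 - p.1) := by rw [← hz']; simp [smul_eq_mul]
    have hz2 : z.2 = p.2 + sz * (q.2 - p.2) := by rw [← hz']; simp [smul_eq_mul]
    have hw1 : w.1 = p.1 + sw * (q.1 - p.1) := by rw [← hw']; simp [smul_eq_mul]
    have hw2 : w.2 = p.2 + sw * (q.2 - p.2) := by rw [← hw']; simp [smul_eq_mul]
    -- find u ∈ segment with the exact difference formula
    have hkey : ∃ u ∈ segment ℝ p q,
        (z.2 + f (α - z.1)) - (w.2 + f (α - w.1)) =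
          (sz - sw) * ((q.2 - p.2) - f' (α - u.1) * (q.1 - p.1)) := by
      by_cases heq : z.1 = w.1
      · refine ⟨z, hzL, ?_⟩
        have h0 : (sz - sw) * (q.1 - p.1) = 0 := by
          have h' := heq
          rw [hz1, hw1] at h'
          linear_combination h'
        have hf : f (α - z.1) = f (α - w.1) := by rw [heq]
        linear_combination hz2 - hw2 + hf + f' (α - z.1) * h0
      · obtain ⟨c, hc1, hc2, hc3⟩ := mvt_abs f f' hderiv (hstrip w hwL) (hstrip z hzL)
        have hwz : w.1 - z.1 ≠ 0 := sub_ne_zero.mpr (Ne.symm heq)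
        set τ := (α - c - z.1) / (w.1 - z.1) with hτdef
        have hτ : τ ∈ Set.Icc (0:ℝ) 1 := by
          rcases lt_or_gt_of_ne heq with h | h
          · have hmin : min (α - w.1) (α - z.1) = α - w.1 := min_eq_left (by linarith)
            have hmax : max (α - w.1) (α - z.1) = α - z.1 := max_eq_right (by linarith)
            rw [hmin] at hc1; rw [hmax] at hc2
            constructor
            · exact div_nonneg (by linarith) (by linarith)
            · rw [div_le_one (by linarith)]; linarith
          · have hmin : min (α - w.1) (α - z.1) = α - z.1 := min_eq_right (by linarith)
            have hmax : max (α - w.1) (α - z.1) = α - w.1 := max_eq_left (by linarith)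
            rw [hmin] at hc1; rw [hmax] at hc2
            constructor
            · exact div_nonneg_iff.mpr (Or.inr ⟨by linarith, by linarith⟩)
            · rw [div_le_one_iff]
              exact Or.inr (Or.inr ⟨by linarith, by linarith⟩)
        set u := z + τ • (w - z) with hudef
        have huL : u ∈ segment ℝ p q := by
          apply (convex_segment p q).segment_subset hzL hwL
          rw [segment_eq_image']
          exact ⟨τ, hτ, rfl⟩
        have hu1 : u.1 = α - c := by
          rw [hudef]
          simp only [Prod.fst_add, Prod.smul_fst, Prod.fst_sub, smul_eq_mul]
          rw [hτdef]
          field_simp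
          ring
        refine ⟨u, huL, ?_⟩
        have hcu : α - u.1 = c := by rw [hu1]; ring
        rw [hcu]
        linear_combination hc3 + hz2 - hw2 + f' c * (hw1 - hz1)
    obtain ⟨u, huL, hform⟩ := hkey
    have hm : |f' (α - u.1)| ≤ M := hMb _ (hstrip u huL)
    have hkey2 := key_est M (f' (α - u.1)) hm (q - p)
    have hqp1 : (q - p).1 = q.1 - p.1 := rfl
    have hqp2 : (q - p).2 = q.2 - p.2 := rfl
    rw [hqp1, hqp2] at hkey2
    have hst : |sz - sw| ≤ 1 := by
      rw [abs_le]; constructor <;> [linarith [hsz.1, hsw.2]; linarith [hsz.2, hsw.1]]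
    have helen0 : (0:ℝ) ≤ elen (q - p) := Real.sqrt_nonneg _
    have hC0 : (0:ℝ) ≤ C := Real.sqrt_nonneg _
    calc |(z.2 + f (α - z.1)) - (w.2 + f (α - w.1))|
        = |sz - sw| * |(q.2 - p.2) - f' (α - u.1) * (q.1 - p.1)| := by
          rw [hform, abs_mul]
      _ ≤ 1 * |(q.2 - p.2) - f' (α - u.1) * (q.1 - p.1)| :=
          mul_le_mul_of_nonneg_right hst (abs_nonneg _)
      _ = |(q.2 - p.2) - f' (α - u.1) * (q.1 - p.1)| := one_mul _
      _ ≤ C * dist (dir (1, f' (α - u.1))) (dir (q - p)) * elen (q - p) := hkey2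
      _ ≤ C * S * elen (q - p) := by
          apply mul_le_mul_of_nonneg_right _ helen0
          exact mul_le_mul_of_nonneg_left (hSel u huL) hC0
  calc volume ((fun x : ℝ × ℝ => x.2 + f (α - x.1)) '' segment ℝ p q)
      ≤ EMetric.diam ((fun x : ℝ × ℝ => x.2 + f (α - x.1)) '' segment ℝ p q) :=
        Real.volume_le_diam _
    _ ≤ ENNReal.ofReal (C * S * elen (q - p)) := by
        apply EMetric.diam_le
        rintro x ⟨z, hz, rfl⟩ y ⟨w, hw, rfl⟩
        rw [edist_dist]
        apply ENNReal.ofReal_le_ofReal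
        rw [Real.dist_eq]
        exact hpair z hz w hw
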